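/- The Jafarkhani quasi-orthogonal code is not fully diverse: there exist complex numbers c₁, c₂, c₃, c₄, not all zero, such that the 4×4 matrix X = [[X₁, -X₂*],[X₂, X₁*]] built from Alamouti blocks X₁ = X₁(c₁,c₂) and X₂ = X₂(c₃,c₄) has det(Xᴴ X) = 0. -/

import Mathlib

open Complex Matrix

theorem jafarkhani_not_fully_diverse :
    ∃ c₁ c₂ c₃ c₄ : ℂ, ¬(c₁ = 0 ∧ c₂ = 0 ∧ c₃ = 0 ∧ c₄ = 0) ∧
      (let X₁ : Matrix (Fin 2) (Fin 2) ℂ :=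
        !![c₁, -(starRingEnd ℂ) c₂; c₂, (starRingEnd ℂ) c₁]
      let X₂ : Matrix (Fin 2) (Fin 2) ℂ :=
        !![c₃, -(starRingEnd ℂ) c₄; c₄, (starRingEnd ℂ) c₃]
      let X : Matrix (Fin 2 ⊕ Fin 2) (Fin 2 ⊕ Fin 2) ℂ :=
        Matrix.fromBlocks X₁ (-(X₂.map (starRingEnd ℂ))) X₂ (X₁.map (starRingEnd ℂ))
      (Xᴴ * X).det = 0) := by
  refine ⟨1, 0, 0, 1, by simp, ?_⟩
  intro X₁ X₂ X
  have hX : X.det = 0 := by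
    have h1 : X₁.map (starRingEnd ℂ) = 1 := by
      ext i j
      fin_cases i <;> fin_cases j <;> simp [X₁]
    show (Matrix.fromBlocks X₁ (-(X₂.map (starRingEnd ℂ))) X₂ (X₁.map (starRingEnd ℂ))).det = 0
    rw [h1, Matrix.det_fromBlocks_one₂₂]
    have : X₁ - -X₂.map (starRingEnd ℂ) * X₂ = 0 := by
      ext i j
      fin_cases i <;> fin_cases j <;>
        simp [X₁, X₂, Matrix.mul_apply, Fin.sum_univ_two]
    rw [this, Matrix.det_zero]
  rw [Matrix.det_mul, hX, mul_zero]
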